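/- Let S be a nonempty finite set, A = (A_{ss'}) a real S×S matrix, and b_s nonzero reals with Σ_{s'} A_{ss'} b_{s'} = 2 for all s ∈ S. Let μ > 0 and let P be real with P ≠ 0 and P > −2μ, and set B̄_s = −b_s P (P + 2μ). Define H_s(z) = (1 + P z)^{b_s} (real power). Then each H_s is positive on [0, (2μ)^{-1}], H_s(0) = 1, and for all z ∈ (0, (2μ)^{-1}): d/dz ( (1 − 2μ z) · H_s'(z)/H_s(z) ) = B̄_s · Π_{s'∈S} H_{s'}(z)^{−A_{ss'}}. -/

import Mathlib

open scoped BigOperators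

/-- The one-block (block-orthogonal) moduli functions `H_s(z) = (1 + P z)^{b_s}`
(real power), with `Σ_{s'} A_{ss'} b_{s'} = 2`, `P ≠ 0`, `P > −2μ` and
`B̄_s = −b_s P(P + 2μ)`, are positive on `[0, (2μ)^{-1}]`, satisfy `H_s(0) = 1`, and
solve the black-brane master equations
`d/dz((1 − 2μz) H_s'/H_s) = B̄_s Π_{s'} H_{s'}^{−A_{ss'}}`. -/
theorem stmt19 (S : Type) [Fintype S] [Nonempty S]
    (A : Matrix S S ℝ) (b : S → ℝ) (hbne : ∀ s, b s ≠ 0)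
    (hb : ∀ s, ∑ s', A s s' * b s' = 2)
    (μ : ℝ) (hμ : 0 < μ) (P : ℝ) (hPne : P ≠ 0) (hPgt : -2 * μ < P)
    (Bbar : S → ℝ) (hBbar : ∀ s, Bbar s = -(b s) * P * (P + 2 * μ))
    (H : S → ℝ → ℝ) (hH : ∀ s z, H s z = (1 + P * z) ^ (b s)) :
    (∀ s, ∀ z ∈ Set.Icc (0 : ℝ) (2 * μ)⁻¹, 0 < H s z) ∧
    (∀ s, H s 0 = 1) ∧
    (∀ s, ∀ z ∈ Set.Ioo (0 : ℝ) (2 * μ)⁻¹,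
      deriv (fun w => (1 - 2 * μ * w) * (deriv (H s) w / H s w)) z
        = Bbar s * ∏ s', H s' z ^ (-(A s s'))) := by
  have h2μ : (0:ℝ) < 2 * μ := by linarith
  have hpos : ∀ z ∈ Set.Icc (0 : ℝ) (2 * μ)⁻¹, 0 < 1 + P * z := by
    rintro z ⟨hz0, hz1⟩
    rcases eq_or_lt_of_le hz0 with h | h
    · simp [← h]
    · have h1 : -2 * μ * z < P * z := mul_lt_mul_of_pos_right hPgt h
      have h2 : 2 * μ * z ≤ 1 := by
        have := mul_le_mul_of_nonneg_left hz1 h2μ.le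
        rwa [mul_inv_cancel₀ h2μ.ne'] at this
      nlinarith
  refine ⟨?_, ?_, ?_⟩
  · intro s z hz
    rw [hH]
    exact Real.rpow_pos_of_pos (hpos z hz) _
  · intro s
    rw [hH]; simp
  · intro s z hz
    have hzpos : 0 < 1 + P * z := hpos z (Set.Ioo_subset_Icc_self hz)
    -- derivative of H s at points where 1 + P w > 0
    have hHderiv : ∀ s' w, 0 < 1 + P * w →
        HasDerivAt (H s') (P * b s' * (1 + P * w) ^ (b s' - 1)) w := by
      intro s' w hw
      have hlin : HasDerivAt (fun w : ℝ => 1 + P * w) P w := by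
        simpa using ((hasDerivAt_id w).const_mul P).const_add 1
      have hHs : H s' = fun w => (1 + P * w) ^ (b s') := funext (hH s')
      rw [hHs]
      exact hlin.rpow_const (Or.inl hw.ne')
    have hratio : ∀ w, 0 < 1 + P * w →
        deriv (H s) w / H s w = P * b s / (1 + P * w) := by
      intro w hw
      rw [(hHderiv s w hw).deriv, hH]
      have ht : (1 + P * w) ^ (b s) ≠ 0 := (Real.rpow_pos_of_pos hw _).ne'
      rw [Real.rpow_sub hw, Real.rpow_one]
      field_simp
    have hU : ∀ᶠ w in nhds z, 0 < 1 + P * w := by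
      have : IsOpen {w : ℝ | 0 < 1 + P * w} :=
        isOpen_lt continuous_const (by fun_prop)
      exact this.eventually_mem hzpos
    have heq : (fun w => (1 - 2 * μ * w) * (deriv (H s) w / H s w))
        =ᶠ[nhds z] (fun w => (1 - 2 * μ * w) * (P * b s / (1 + P * w))) :=
      hU.mono fun w hw => by simp only [hratio w hw]
    rw [heq.deriv_eq]
    -- compute deriv of the simplified function
    have hlin : HasDerivAt (fun w : ℝ => 1 + P * w) P z := by
      simpa using ((hasDerivAt_id z).const_mul P).const_add 1
    have hinv : HasDerivAt (fun w : ℝ => (1 + P * w)⁻¹)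
        (-P / (1 + P * z) ^ 2) z := hlin.inv hzpos.ne'
    have hfac : HasDerivAt (fun w : ℝ => 1 - 2 * μ * w) (-(2 * μ)) z := by
      simpa using ((hasDerivAt_id z).const_mul (2*μ)).const_sub 1
    have hg : HasDerivAt (fun w => (1 - 2 * μ * w) * (P * b s / (1 + P * w)))
        (-(2 * μ) * (P * b s / (1 + P * z))
          + (1 - 2 * μ * z) * (P * b s * (-P / (1 + P * z) ^ 2))) z := by
      have := hfac.mul ((hinv.const_mul (P * b s)))
      simp only [div_eq_mul_inv]
      exact this
    rw [hg.deriv]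
    -- compute the RHS product
    have hprod : (∏ s', H s' z ^ (-(A s s'))) = (1 + P * z) ^ (-2 : ℝ) := by
      have : ∀ s', H s' z ^ (-(A s s')) = (1 + P * z) ^ (b s' * -(A s s')) := by
        intro s'
        rw [hH, ← Real.rpow_mul hzpos.le]
      rw [Finset.prod_congr rfl (fun s' _ => this s'),
        ← Real.rpow_sum_of_pos hzpos]
      congr 1
      have : ∑ s', b s' * -(A s s') = -∑ s', A s s' * b s' := by
        rw [← Finset.sum_neg_distrib]
        exact Finset.sum_congr rfl fun s' _ => by ring
      rw [this, hb s]
    rw [hprod, hBbar]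
    have h2 : (1 + P * z) ^ (-2 : ℝ) = ((1 + P * z) ^ 2)⁻¹ := by
      rw [Real.rpow_neg hzpos.le, show ((2:ℝ)) = ((2:ℕ):ℝ) by norm_num,
        Real.rpow_natCast]
    rw [h2]
    have ht2 : ((1 + P * z) ^ 2) ≠ 0 := pow_ne_zero 2 hzpos.ne'
    field_simp
    ring
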